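/- arXiv:1205.1358 — 2 statements merged into one kernel-verified Lean document; each statement's English description precedes it below -/
import Mathlib

section
/- Let 𝒞 be the class of undirected graphs that are finite disjoint unions of finite undirected paths. For B ∈ {0,1}, an FO sentence φ is in PSC(B) over 𝒞 if and only if there exists n ∈ ℕ such that φ is equivalent over 𝒞 to the condition: there exist elements a₁,…,a_B such that for all elements b₁,…,b_n, the substructure induced on {a₁,…,a_B,b₁,…,b_n} satisfies φ. -/
open FirstOrder Language

universe u v

namespace Stmt

variable {L : FirstOrder.Language.{u, v}}

/-- Universally quantify the last `k` bound variables of a bounded formula. -/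
def allsK {n : ℕ} : (k : ℕ) → L.BoundedFormula Empty (n + k) → L.BoundedFormula Empty n
  | 0, φ => φ
  | k + 1, φ => allsK k φ.all

/-- Existentially quantify the last `k` bound variables of a bounded formula. -/
def exsK {n : ℕ} : (k : ℕ) → L.BoundedFormula Empty (n + k) → L.BoundedFormula Empty n
  | 0, φ => φ
  | k + 1, φ => exsK k φ.ex

/-- The Σ⁰₂ sentence `∃x₁…x_B ∀y₁…y_n β` (for `β` quantifier-free). -/
def sigma2 (B n : ℕ) (β : L.BoundedFormula Empty (B + n)) : L.Sentence :=
  (allsK n β).exs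

/-- The Π⁰₂ sentence `∀x₁…x_k ∃y₁…y_m β` (for `β` quantifier-free). -/
def pi2 (k m : ℕ) (β : L.BoundedFormula Empty (k + m)) : L.Sentence :=
  (exsK m β).alls

/-- `C` is a core of the structure `M` w.r.t. `φ`: every (nonempty) substructure of `M`
whose universe contains `C` satisfies `φ`. -/
def IsCore (φ : L.Sentence) (M : Type max u v) [L.Structure M] (C : Set M) : Prop :=
  ∀ N : L.Substructure M, C ⊆ (N : Set M) → Nonempty N → ↥N ⊨ φ

/-- `φ` is preserved under substructures modulo a finite core: every model of `φ`
has a finite core w.r.t. `φ`. -/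
def PSCf (φ : L.Sentence) : Prop :=
  ∀ (M : Type max u v) [L.Structure M] [Nonempty M],
    M ⊨ φ → ∃ C : Set M, C.Finite ∧ IsCore φ M C

/-- `φ ∈ PSC(B)`: every model of `φ` has a core of size at most `B` w.r.t. `φ`. -/
def PSC (φ : L.Sentence) (B : ℕ) : Prop :=
  ∀ (M : Type max u v) [L.Structure M] [Nonempty M],
    M ⊨ φ → ∃ C : Finset M, C.card ≤ B ∧ IsCore φ M ↑C

/-- Logical equivalence of sentences: they hold in exactly the same (nonempty) structures. -/
def Equiv (φ ψ : L.Sentence) : Prop :=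
  ∀ (M : Type max u v) [L.Structure M] [Nonempty M], M ⊨ φ ↔ M ⊨ ψ

/-- The edge relation of a structure for the language with a single binary relation. -/
abbrev E (M : Type) [Language.graph.Structure M] (x y : M) : Prop :=
  Structure.RelMap Language.adj ![x, y]

/-- Membership in the class 𝒞 of undirected graphs that are finite disjoint unions of finite
undirected paths: the structure is finite, the edge relation is symmetric and irreflexive,
every vertex has degree at most 2, and there is no (undirected) cycle, i.e. no injective
cyclically-ordered sequence of at least 3 vertices with consecutive edges. -/
def InUndirPaths (M : Type) [Language.graph.Structure M] : Prop :=
  Finite M ∧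
  (∀ x y : M, E M x y → E M y x) ∧
  (∀ x : M, ¬ E M x x) ∧
  (∀ v u₁ u₂ u₃ : M, E M v u₁ → E M v u₂ → E M v u₃ → (u₁ = u₂ ∨ u₁ = u₃ ∨ u₂ = u₃)) ∧
  ∀ (m : ℕ) (f : Fin (m + 3) → M), Function.Injective f → ¬ ∀ i, E M (f i) (f (i + 1))

/-- `M` has at least `B` connected components: there are `B` vertices that are pairwise
unreachable from one another. -/
def AtLeastComponents (M : Type) [Language.graph.Structure M] (B : ℕ) : Prop :=
  ∃ f : Fin B → M, ∀ i j : Fin B, i ≠ j → ¬ Relation.ReflTransGen (E M) (f i) (f j)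

section Basics

variable {M : Type} [Language.graph.Structure M] {N : Type} [Language.graph.Structure N]

lemma vec_two (x : Fin 2 → M) : ![x 0, x 1] = x := by
  funext i; fin_cases i <;> rfl

lemma relMap_iff (x : Fin 2 → M) :
    Structure.RelMap (L := Language.graph) Language.adj x ↔ E M (x 0) (x 1) :=
  iff_of_eq (congrArg _ (vec_two x)).symm

lemma E_sub (S : Language.graph.Substructure M) (x y : S) : E S x y ↔ E M x y := by
  show Structure.RelMap Language.adj (fun i => ((![x, y] : Fin 2 → S) i : M)) ↔
    Structure.RelMap Language.adj ![(x : M), (y : M)]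
  have h : (fun i => ((![x, y] : Fin 2 → S) i : M)) = ![(x : M), (y : M)] := by
    funext i; fin_cases i <;> rfl
  rw [h]

/-- Build a graph-language isomorphism from an edge-preserving bijection. -/
def mkIso (e : M ≃ N) (h : ∀ x y, E M x y ↔ E N (e x) (e y)) : M ≃[Language.graph] N where
  toEquiv := e
  map_fun' := fun {n} f _ => isEmptyElim f
  map_rel' := fun {n} r x => by
    cases r
    rw [relMap_iff, relMap_iff]
    exact (h (x 0) (x 1)).symm

lemma iso_realize (e : M ≃[Language.graph] N) (φ : Language.graph.Sentence) :
    M ⊨ φ ↔ N ⊨ φ :=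
  StrongHomClass.realize_sentence e φ

lemma top_realize (φ : Language.graph.Sentence) :
    (⊤ : Language.graph.Substructure M) ⊨ φ ↔ M ⊨ φ :=
  iso_realize Substructure.topEquiv φ

lemma InUndirPaths.sub (h : InUndirPaths M) (S : Language.graph.Substructure M) :
    InUndirPaths S := by
  obtain ⟨hfin, hsym, hirr, hdeg, hacy⟩ := h
  have : Finite M := hfin
  refine ⟨Subtype.finite, ?_, ?_, ?_, ?_⟩
  · intro x y hxy
    rw [E_sub] at hxy ⊢
    exact hsym _ _ hxy
  · intro x hx
    rw [E_sub] at hx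
    exact hirr _ hx
  · intro v u₁ u₂ u₃ h1 h2 h3
    rw [E_sub] at h1 h2 h3
    rcases hdeg _ _ _ _ h1 h2 h3 with h | h | h
    · exact Or.inl (Subtype.coe_injective h)
    · exact Or.inr (Or.inl (Subtype.coe_injective h))
    · exact Or.inr (Or.inr (Subtype.coe_injective h))
  · intro m f hf hall
    refine hacy m (fun i => (f i : M)) (fun i j hij => hf (Subtype.coe_injective hij)) ?_
    intro i
    rw [← E_sub]
    exact hall i

end Basics


section Chain
variable {M : Type} [Language.graph.Structure M]

/-- A chain of length `m` through `v`: injective on `[0,m]`, consecutive edges, passes `v`. -/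
def ChainOn (m : ℕ) (h : ℕ → M) (v : M) : Prop :=
  (∀ i j, i ≤ m → j ≤ m → h i = h j → i = j) ∧
  (∀ i, i < m → E M (h i) (h (i + 1))) ∧ ∃ t, t ≤ m ∧ h t = v

lemma exists_chain (hM : InUndirPaths M) (v : M) :
    ∃ m h, ChainOn m h v ∧
      (∀ i u, i ≤ m → E M (h i) u → ∃ j, j ≤ m ∧ u = h j ∧ (j + 1 = i ∨ i + 1 = j)) := by
  classical
  obtain ⟨hfin, hsym, hirr, hdeg, hacy⟩ := hM
  have : Finite M := hfin
  set P : ℕ → Prop := fun m => ∃ h : ℕ → M, ChainOn m h v with hPdef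
  have hP0 : P 0 := ⟨fun _ => v, fun i j hi hj _ => by omega, fun i hi => by omega, 0, le_refl _, rfl⟩
  have hbound : ∀ m, P m → m ≤ Nat.card M := by
    intro m ⟨h, hinj, _, _⟩
    have hf : Function.Injective (fun i : Fin (m + 1) => h i.val) := by
      intro i j hij
      exact Fin.ext (hinj i.val j.val (by omega) (by omega) hij)
    have hcard := Nat.card_le_card_of_injective _ hf
    have h2 : Nat.card (Fin (m + 1)) = m + 1 := by simp
    omega
  set m := Nat.findGreatest P (Nat.card M) with hm
  have hPm : P m := Nat.findGreatest_spec (Nat.zero_le _) hP0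
  have hmax : ¬ P (m + 1) := by
    intro hp
    exact Nat.findGreatest_is_greatest (lt_add_one m) (hbound _ hp) hp
  -- no chain of length m can be extended at its far end
  have endpoint : ∀ h' : ℕ → M, ChainOn m h' v → ∀ u, E M (h' m) u → ∃ j, j ≤ m ∧ u = h' j := by
    intro h' hch u hu
    obtain ⟨hinj', hedge', t', ht', hvt'⟩ := hch
    by_contra hcon
    push_neg at hcon
    apply hmax
    refine ⟨fun i => if i ≤ m then h' i else u, ?_, ?_, ?_⟩
    · intro i j hi hj hij
      by_cases h1 : i ≤ m <;> by_cases h2 : j ≤ m <;> simp only [h1, h2, if_pos, if_neg,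
        if_true, if_false] at hij
      · exact hinj' _ _ h1 h2 hij
      · exact absurd hij.symm (hcon i h1)
      · exact absurd hij (hcon j h2)
      · omega
    · intro i hi
      by_cases h1 : i < m
      · simp only [show i ≤ m by omega, show i + 1 ≤ m by omega, if_true]
        exact hedge' i h1
      · have hieq : i = m := by omega
        simp only [hieq, le_refl, if_true, show ¬ m + 1 ≤ m by omega, if_false]
        exact hu
    · exact ⟨t', by omega, by simp [show t' ≤ m from ht', hvt']⟩
  -- a neighbor of the far end inside the chain must be the previous vertex
  have endsnap : ∀ h' : ℕ → M, ChainOn m h' v → ∀ j, j ≤ m → E M (h' m) (h' j) → j + 1 = m := by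
    intro h' hch j hj hE
    obtain ⟨hinj', hedge', -⟩ := hch
    have hjm : j ≠ m := by
      intro e; subst e; exact hirr _ hE
    by_contra hne
    have hj2 : j + 2 ≤ m := by omega
    set c := m - j - 2 with hc
    have hmc : m = j + c + 2 := by omega
    refine hacy c (fun t : Fin (c + 3) => h' (j + t.val)) ?_ ?_
    · intro s t hst
      have hslt := s.isLt
      have htlt := t.isLt
      have hs : j + s.val ≤ m := by omega
      have ht2 : j + t.val ≤ m := by omega
      have := hinj' _ _ hs ht2 hst
      exact Fin.ext (by omega)
    · intro i
      have hilt := i.isLt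
      have hval : ((i + 1 : Fin (c + 3))).val = (i.val + 1) % (c + 3) := by
        rw [Fin.val_add]
        norm_num
      by_cases hi : i.val = c + 2
      · have h0 : ((i + 1 : Fin (c + 3))).val = 0 := by
          rw [hval, hi, show c + 2 + 1 = c + 3 from rfl, Nat.mod_self]
        simp only [h0, hi, Nat.add_zero]
        have : j + (c + 2) = m := by omega
        rw [this]
        exact hE
      · have h0 : ((i + 1 : Fin (c + 3))).val = i.val + 1 := by
          rw [hval]; exact Nat.mod_eq_of_lt (by omega)
        simp only [h0]
        have : j + (i.val + 1) = (j + i.val) + 1 := by omega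
        rw [this]
        exact hedge' (j + i.val) (by omega)
  obtain ⟨h, hch⟩ := hPm
  obtain ⟨hinj, hedge, t₀, ht₀, hvt⟩ := hch
  have hrevch : ChainOn m (fun i => h (m - i)) v := by
    refine ⟨?_, ?_, m - t₀, by omega, ?_⟩
    · intro i j hi hj hij
      have := hinj _ _ (by omega) (by omega) hij
      omega
    · intro i hi
      have he := hedge (m - i - 1) (by omega)
      have h1 : m - i - 1 + 1 = m - i := by omega
      rw [h1] at he
      have h2 : m - (i + 1) = m - i - 1 := by omega
      show E M (h (m - i)) (h (m - (i + 1)))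
      rw [h2]
      exact hsym _ _ he
    · show h (m - (m - t₀)) = v
      have : m - (m - t₀) = t₀ := by omega
      rw [this]; exact hvt
  refine ⟨m, h, ⟨hinj, hedge, t₀, ht₀, hvt⟩, ?_⟩
  intro i u hi hE
  by_cases him : i = m
  · subst him
    obtain ⟨j, hj, rfl⟩ := endpoint h ⟨hinj, hedge, t₀, ht₀, hvt⟩ u hE
    have := endsnap h ⟨hinj, hedge, t₀, ht₀, hvt⟩ j hj hE
    exact ⟨j, hj, rfl, Or.inl this⟩
  · by_cases hi0 : i = 0
    · subst hi0
      have hE' : E M ((fun i => h (m - i)) m) u := by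
        simpa [Nat.sub_self] using hE
      obtain ⟨j, hj, hu⟩ := endpoint _ hrevch u hE'
      have hj1 := endsnap _ hrevch j hj (hu ▸ hE')
      exact ⟨m - j, by omega, hu, Or.inr (by omega)⟩
    · have e1 : E M (h i) (h (i - 1)) := by
        have := hedge (i - 1) (by omega)
        rw [show i - 1 + 1 = i by omega] at this
        exact hsym _ _ this
      have e2 : E M (h i) (h (i + 1)) := hedge i (by omega)
      rcases hdeg (h i) (h (i - 1)) (h (i + 1)) u e1 e2 hE with h12 | hu | hu
      · have := hinj _ _ (by omega) (by omega) h12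
        omega
      · exact ⟨i - 1, by omega, hu.symm, Or.inl (by omega)⟩
      · exact ⟨i + 1, by omega, hu.symm, Or.inr rfl⟩

end Chain

section Decomp
variable {M : Type} [Language.graph.Structure M]

/-- Decomposition of an `E`-closed finite set into disjoint paths. -/
lemma decomp_finset (hM : InUndirPaths M) [Nonempty M] :
    ∀ S : Finset M, (∀ x ∈ S, ∀ y, E M x y → y ∈ S) →
    ∃ (L : List ℕ) (g : ℕ → ℕ → M),
      (∀ x ∈ S, ∃ c, c < L.length ∧ ∃ i, i ≤ L.getD c 0 ∧ g c i = x) ∧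
      (∀ c, c < L.length → ∀ i, i ≤ L.getD c 0 → g c i ∈ S) ∧
      (∀ c c' i i', c < L.length → c' < L.length → i ≤ L.getD c 0 → i' ≤ L.getD c' 0 →
        g c i = g c' i' → c = c' ∧ i = i') ∧
      (∀ c c' i i', c < L.length → c' < L.length → i ≤ L.getD c 0 → i' ≤ L.getD c' 0 →
        (E M (g c i) (g c' i') ↔ c = c' ∧ (i + 1 = i' ∨ i' + 1 = i))) := by
  classical
  intro S
  induction S using Finset.strongInduction with
  | _ S ih =>
  intro hclosed
  rcases S.eq_empty_or_nonempty with rfl | ⟨v, hv⟩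
  · exact ⟨[], fun _ _ => Classical.arbitrary M, by simp, by simp, by simp, by simp⟩
  obtain ⟨hfin, hsym, hirr, hdeg, hacy⟩ := id hM
  obtain ⟨m, h, ⟨hinj, hedge, t₀, ht₀, hvt⟩, hnbr⟩ := exists_chain hM v
  -- all chain vertices lie in S
  have hchS : ∀ i, i ≤ m → h i ∈ S := by
    have step : ∀ d i, i ≤ m → (i = t₀ + d ∨ i + d = t₀) → h i ∈ S := by
      intro d
      induction d with
      | zero =>
        intro i hi hcase
        have : i = t₀ := by omega
        rw [this, hvt]; exact hv
      | succ d ihd =>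
        intro i hi hcase
        rcases hcase with hc1 | hc2
        · have hd : h (t₀ + d) ∈ S := ihd (t₀ + d) (by omega) (Or.inl rfl)
          have he : E M (h (t₀ + d)) (h (t₀ + d + 1)) := hedge (t₀ + d) (by omega)
          rw [hc1, show t₀ + (d + 1) = t₀ + d + 1 by omega]
          exact hclosed _ hd _ he
        · have hd : h (i + 1) ∈ S := ihd (i + 1) (by omega) (Or.inr (by omega))
          exact hclosed _ hd _ (hsym _ _ (hedge i (by omega)))
    intro i hi
    rcases le_total t₀ i with hle | hle
    · exact step (i - t₀) i hi (Or.inl (by omega))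
    · exact step (t₀ - i) i hi (Or.inr (by omega))
  set A : Set M := {x | ∃ i, i ≤ m ∧ h i = x} with hA
  set S' : Finset M := S.filter (fun x => x ∉ A) with hS'
  have hS'sub : ∀ x ∈ S', x ∈ S ∧ x ∉ A := by
    intro x hx
    rw [hS', Finset.mem_filter] at hx
    exact hx
  have hS'cl : ∀ x ∈ S', ∀ y, E M x y → y ∈ S' := by
    intro x hx y hxy
    obtain ⟨hxS, hxA⟩ := hS'sub x hx
    rw [hS', Finset.mem_filter]
    refine ⟨hclosed _ hxS _ hxy, ?_⟩
    intro ⟨j, hj, hjy⟩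
    obtain ⟨j', hj', hx', -⟩ := hnbr j x hj (by rw [hjy]; exact hsym _ _ hxy)
    exact hxA ⟨j', hj', hx'.symm⟩
  have hss : S' ⊂ S := by
    rw [hS']
    apply Finset.filter_ssubset.2
    exact ⟨v, hv, by simp [hA]; exact ⟨t₀, ht₀, hvt⟩⟩
  obtain ⟨L', g', hsurj', hmem', hinj', hedge'⟩ := ih S' hss hS'cl
  refine ⟨m :: L', fun c => if c = 0 then h else g' (c - 1), ?_, ?_, ?_, ?_⟩
  · -- surjectivity
    intro x hx
    by_cases hxA : x ∈ A
    · obtain ⟨i, hi, hix⟩ := hxA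
      exact ⟨0, by simp, i, by simpa using hi, by simpa using hix⟩
    · have : x ∈ S' := by rw [hS', Finset.mem_filter]; exact ⟨hx, hxA⟩
      obtain ⟨c, hc, i, hi, hgi⟩ := hsurj' x this
      exact ⟨c + 1, by simpa using hc, i, by simpa using hi, by simpa using hgi⟩
  · -- membership
    intro c hc i hi
    match c with
    | 0 => simpa using hchS i (by simpa using hi)
    | c + 1 =>
      simp only [List.getD_cons_succ] at hi
      simp only [Nat.add_sub_cancel, if_neg (Nat.succ_ne_zero c)]
      exact (hS'sub _ (hmem' c (by simpa using hc) i hi)).1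
  · -- injectivity
    intro c c' i i' hc hc' hi hi' heq
    match c, c' with
    | 0, 0 =>
      simp only [if_pos rfl] at heq
      simp only [List.getD_cons_zero] at hi hi'
      exact ⟨rfl, hinj i i' hi hi' heq⟩
    | 0, c' + 1 =>
      simp only [if_pos rfl, if_neg (Nat.succ_ne_zero c'), Nat.add_sub_cancel] at heq
      simp only [List.getD_cons_zero] at hi
      simp only [List.getD_cons_succ] at hi'
      exfalso
      exact (hS'sub _ (hmem' c' (by simpa using hc') i' hi')).2 ⟨i, hi, heq⟩
    | c + 1, 0 =>
      simp only [if_pos rfl, if_neg (Nat.succ_ne_zero c), Nat.add_sub_cancel] at heq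
      simp only [List.getD_cons_zero] at hi'
      simp only [List.getD_cons_succ] at hi
      exfalso
      exact (hS'sub _ (hmem' c (by simpa using hc) i hi)).2 ⟨i', hi', heq.symm⟩
    | c + 1, c' + 1 =>
      simp only [if_neg (Nat.succ_ne_zero c), if_neg (Nat.succ_ne_zero c'),
        Nat.add_sub_cancel] at heq
      simp only [List.getD_cons_succ] at hi hi'
      obtain ⟨hcc, hii⟩ := hinj' c c' i i' (by simpa using hc) (by simpa using hc') hi hi' heq
      exact ⟨by omega, hii⟩
  · -- edges
    intro c c' i i' hc hc' hi hi'
    match c, c' with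
    | 0, 0 =>
      simp only [if_pos rfl]
      simp only [List.getD_cons_zero] at hi hi'
      constructor
      · intro hE
        obtain ⟨j, hj, hji, hadj⟩ := hnbr i (h i') hi hE
        have : i' = j := hinj _ _ hi' hj hji
        exact ⟨by simp, by omega⟩
      · rintro ⟨-, hadj | hadj⟩
        · rw [← hadj]; exact hedge i (by omega)
        · rw [← hadj]; exact hsym _ _ (hedge i' (by omega))
    | 0, c' + 1 =>
      simp only [if_pos rfl, if_neg (Nat.succ_ne_zero c'), Nat.add_sub_cancel]
      simp only [List.getD_cons_zero] at hi
      simp only [List.getD_cons_succ] at hi'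
      constructor
      · intro hE
        exfalso
        obtain ⟨j, hj, hji, -⟩ := hnbr i _ hi hE
        exact (hS'sub _ (hmem' c' (by simpa using hc') i' hi')).2 ⟨j, hj, hji.symm⟩
      · rintro ⟨hcc, -⟩; omega
    | c + 1, 0 =>
      simp only [if_pos rfl, if_neg (Nat.succ_ne_zero c), Nat.add_sub_cancel]
      simp only [List.getD_cons_zero] at hi'
      simp only [List.getD_cons_succ] at hi
      constructor
      · intro hE
        exfalso
        obtain ⟨j, hj, hji, -⟩ := hnbr i' _ hi' (hsym _ _ hE)
        exact (hS'sub _ (hmem' c (by simpa using hc) i hi)).2 ⟨j, hj, hji.symm⟩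
      · rintro ⟨hcc, -⟩; omega
    | c + 1, c' + 1 =>
      simp only [if_neg (Nat.succ_ne_zero c), if_neg (Nat.succ_ne_zero c'),
        Nat.add_sub_cancel]
      simp only [List.getD_cons_succ] at hi hi'
      rw [hedge' c c' i i' (by simpa using hc) (by simpa using hc') hi hi']
      constructor
      · rintro ⟨rfl, hadj⟩; exact ⟨rfl, hadj⟩
      · rintro ⟨hcc, hadj⟩; exact ⟨by omega, hadj⟩

end Decomp

section Package

variable {M : Type} [Language.graph.Structure M]

/-- Code alphabet: `inl ℓ` for an unmarked path of length `ℓ`,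
`inr (p, q)` for a marked path with the mark at distance `p` and `q` from its two ends. -/
abbrev A : Type := ℕ ⊕ ℕ × ℕ

lemma package (hM : InUndirPaths M) [Nonempty M] {B : ℕ} (hB : B ≤ 1) (a : Fin B → M) :
    ∃ (L : List ℕ) (g : ℕ → ℕ → M) (code : List A),
      code.length = L.length ∧
      (∀ x : M, ∃ c, c < L.length ∧ ∃ i, i ≤ L.getD c 0 ∧ g c i = x) ∧
      (∀ c c' i i', c < L.length → c' < L.length → i ≤ L.getD c 0 → i' ≤ L.getD c' 0 →
        g c i = g c' i' → c = c' ∧ i = i') ∧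
      (∀ c c' i i', c < L.length → c' < L.length → i ≤ L.getD c 0 → i' ≤ L.getD c' 0 →
        (E M (g c i) (g c' i') ↔ c = c' ∧ (i + 1 = i' ∨ i' + 1 = i))) ∧
      (∀ c, c < L.length →
        ((∀ t : Fin B, ∀ i, i ≤ L.getD c 0 → a t ≠ g c i) ∧
          code.getD c (.inl 0) = .inl (L.getD c 0)) ∨
        (∃ t : Fin B, ∃ p, p ≤ L.getD c 0 ∧ a t = g c p ∧
          code.getD c (.inl 0) = .inr (p, L.getD c 0 - p))) := by
  classical
  have hfin : Finite M := hM.1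
  have := Fintype.ofFinite M
  obtain ⟨L, g, hsurj, hmem, hinj, hedge⟩ :=
    decomp_finset hM (Finset.univ) (fun x _ y _ => Finset.mem_univ y)
  have hsurj' : ∀ x : M, ∃ c, c < L.length ∧ ∃ i, i ≤ L.getD c 0 ∧ g c i = x := by
    intro x
    obtain ⟨c, hc, i, hi, hg⟩ := hsurj x (Finset.mem_univ x)
    exact ⟨c, hc, i, hi, hg⟩
  rcases isEmpty_or_nonempty (Fin B) with hBe | hBn
  · refine ⟨L, g, L.map Sum.inl, by simp, hsurj', hinj, hedge, ?_⟩
    intro c hc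
    left
    refine ⟨fun t => isEmptyElim t, ?_⟩
    rw [List.getD_eq_getElem _ _ (by simpa using hc), List.getD_eq_getElem _ _ hc]
    simp
  · obtain ⟨t⟩ := hBn
    obtain ⟨c₀, hc₀, p₀, hp₀, hg₀⟩ := hsurj' (a t)
    set code : List A := List.ofFn (n := L.length)
      (fun c : Fin L.length =>
        if c.val = c₀ then Sum.inr (p₀, L.getD c₀ 0 - p₀) else Sum.inl (L.getD c.val 0))
      with hcode
    have hclen : code.length = L.length := by simp [hcode]
    have hget : ∀ c, (hc : c < L.length) →
        code.getD c (.inl 0) =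
          if c = c₀ then Sum.inr (p₀, L.getD c₀ 0 - p₀) else Sum.inl (L.getD c 0) := by
      intro c hc
      rw [List.getD_eq_getElem?_getD, hcode, List.getElem?_ofFn]
      simp [hc, List.ofFnNthVal]
    refine ⟨L, g, code, hclen, hsurj', hinj, hedge, ?_⟩
    intro c hc
    by_cases hcc : c = c₀
    · subst hcc
      right
      exact ⟨t, p₀, hp₀, hg₀.symm, by rw [hget c hc]; simp⟩
    · left
      refine ⟨?_, by rw [hget c hc]; simp [hcc]⟩
      intro t' i hi hne
      have ht' : t' = t := by
        have h1 := t'.isLt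
        have h2 := t.isLt
        exact Fin.ext (by omega)
      rw [ht'] at hne
      have := (hinj c c₀ i p₀ hc hc₀ hi hp₀ (by rw [← hne, hg₀])).1
      exact hcc this

lemma sublist_exists_map {α : Type*} (d : α) {l₁ l₂ : List α} (hsl : List.Sublist l₁ l₂) :
    ∃ σ : ℕ → ℕ, (∀ c c', c < l₁.length → c' < l₁.length → σ c = σ c' → c = c') ∧
      ∀ c, c < l₁.length → σ c < l₂.length ∧ l₁.getD c d = l₂.getD (σ c) d := by
  rw [List.sublist_iff_exists_fin_orderEmbedding_get_eq] at hsl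
  obtain ⟨f, hf⟩ := hsl
  refine ⟨fun c => if hc : c < l₁.length then (f ⟨c, hc⟩).val else 0, ?_, ?_⟩
  · intro c c' hc hc' heq
    dsimp only at heq
    rw [dif_pos hc, dif_pos hc'] at heq
    have := f.injective (Fin.ext heq)
    exact congrArg Fin.val this
  · intro c hc
    dsimp only
    rw [dif_pos hc]
    refine ⟨(f ⟨c, hc⟩).isLt, ?_⟩
    rw [List.getD_eq_getElem _ _ hc, List.getD_eq_getElem _ _ (f ⟨c, hc⟩).isLt]
    have := hf ⟨c, hc⟩
    simpa using this

/-- Higman-style WQO for sequences of codes. -/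
lemma codes_wqo (f : ℕ → List A) :
    ∃ k k', k < k' ∧ List.SublistForall₂ (· ≤ · : A → A → Prop) (f k) (f k') := by
  have h1 : (Set.univ : Set ℕ).IsPWO :=
    (Set.isWF_univ_iff.2 (inferInstance)).isPWO
  have h2 : (Set.univ : Set (ℕ × ℕ)).IsPWO := by
    rw [← Set.univ_prod_univ]
    exact h1.prod h1
  have h3 : (Set.univ : Set A).IsPWO := by
    have he : (Set.univ : Set A) = Sum.inl '' Set.univ ∪ Sum.inr '' Set.univ := by
      ext x
      cases x <;> simp
    rw [he]
    refine (h1.image_of_monotone ?_).union (h2.image_of_monotone ?_)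
    · intro a b hab
      exact Sum.inl_le_inl_iff.2 hab
    · intro a b hab
      exact Sum.inr_le_inr_iff.2 hab
  have hh := h3.partiallyWellOrderedOn_sublistForall₂ (r := (· ≤ · : A → A → Prop))
  obtain ⟨k, k', hkk, hr⟩ := hh.exists_lt (f := f) (fun n => by simp)
  exact ⟨k, k', hkk, hr⟩

lemma build_embed {M N : Type} [Language.graph.Structure M] [Language.graph.Structure N]
    {B : ℕ} (hB : B ≤ 1) (a : Fin B → M) (a' : Fin B → N)
    (L : List ℕ) (g : ℕ → ℕ → M) (code : List A)
    (L' : List ℕ) (g' : ℕ → ℕ → N) (code' : List A)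
    (hclen : code.length = L.length) (hclen' : code'.length = L'.length)
    (hsurj : ∀ x : M, ∃ c, c < L.length ∧ ∃ i, i ≤ L.getD c 0 ∧ g c i = x)
    (hinj : ∀ c c' i i', c < L.length → c' < L.length → i ≤ L.getD c 0 → i' ≤ L.getD c' 0 →
        g c i = g c' i' → c = c' ∧ i = i')
    (hedge : ∀ c c' i i', c < L.length → c' < L.length → i ≤ L.getD c 0 → i' ≤ L.getD c' 0 →
        (E M (g c i) (g c' i') ↔ c = c' ∧ (i + 1 = i' ∨ i' + 1 = i)))
    (hinj' : ∀ c c' i i', c < L'.length → c' < L'.length → i ≤ L'.getD c 0 → i' ≤ L'.getD c' 0 →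
        g' c i = g' c' i' → c = c' ∧ i = i')
    (hedge' : ∀ c c' i i', c < L'.length → c' < L'.length → i ≤ L'.getD c 0 → i' ≤ L'.getD c' 0 →
        (E N (g' c i) (g' c' i') ↔ c = c' ∧ (i + 1 = i' ∨ i' + 1 = i)))
    (hcode : ∀ c, c < L.length →
        ((∀ t : Fin B, ∀ i, i ≤ L.getD c 0 → a t ≠ g c i) ∧
          code.getD c (.inl 0) = .inl (L.getD c 0)) ∨
        (∃ t : Fin B, ∃ p, p ≤ L.getD c 0 ∧ a t = g c p ∧
          code.getD c (.inl 0) = .inr (p, L.getD c 0 - p)))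
    (hcode' : ∀ c, c < L'.length →
        ((∀ t : Fin B, ∀ i, i ≤ L'.getD c 0 → a' t ≠ g' c i) ∧
          code'.getD c (.inl 0) = .inl (L'.getD c 0)) ∨
        (∃ t : Fin B, ∃ p, p ≤ L'.getD c 0 ∧ a' t = g' c p ∧
          code'.getD c (.inl 0) = .inr (p, L'.getD c 0 - p)))
    (hr : List.SublistForall₂ (· ≤ · : A → A → Prop) code code') :
    ∃ F : M → N, Function.Injective F ∧ (∀ x y, E M x y ↔ E N (F x) (F y)) ∧
      ∀ t, F (a t) = a' t := by
  classical
  rw [List.sublistForall₂_iff] at hr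
  obtain ⟨l, hfa, hsl⟩ := hr
  have hfl : code.length = l.length := hfa.length_eq
  obtain ⟨σ, hσinj, hσ⟩ := sublist_exists_map (Sum.inl 0 : A) hsl
  have hrel : ∀ c, c < L.length →
      σ c < L'.length ∧ code.getD c (.inl 0) ≤ code'.getD (σ c) (.inl 0) := by
    intro c hc
    have hc2 : c < l.length := by omega
    obtain ⟨hlt, hgd⟩ := hσ c hc2
    have hpt : code.getD c (.inl 0) ≤ l.getD c (.inl 0) := by
      obtain ⟨-, hpt⟩ := List.forall₂_iff_get.1 hfa
      rw [List.getD_eq_getElem _ _ (by omega : c < code.length), List.getD_eq_getElem _ _ hc2]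
      exact hpt c (by omega) hc2
    exact ⟨by omega, le_trans hpt (le_of_eq hgd)⟩
  set shift : ℕ → ℕ := fun c =>
    match code.getD c (.inl 0), code'.getD (σ c) (.inl 0) with
    | .inr pq, .inr pq' => pq'.1 - pq.1
    | _, _ => 0
    with hshift
  -- componentwise facts
  have key : ∀ c, c < L.length → σ c < L'.length ∧
      (∀ i, i ≤ L.getD c 0 → i + shift c ≤ L'.getD (σ c) 0) ∧
      (∀ t p, p ≤ L.getD c 0 → a t = g c p →
        ∃ t' : Fin B, a' t' = g' (σ c) (p + shift c)) := by
    intro c hc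
    obtain ⟨hlt, hle⟩ := hrel c hc
    refine ⟨hlt, ?_⟩
    rcases hcode c hc with ⟨hnot, hceq⟩ | ⟨t, p, hp, hat, hceq⟩
    · rw [hceq] at hle
      rcases hcode' (σ c) hlt with ⟨hnot', hceq'⟩ | ⟨t', p', hp', hat', hceq'⟩
      · rw [hceq'] at hle
        have hll : L.getD c 0 ≤ L'.getD (σ c) 0 := Sum.inl_le_inl_iff.1 hle
        have hs0 : shift c = 0 := by rw [hshift]; simp only; rw [hceq, hceq']
        refine ⟨fun i hi => by omega, ?_⟩
        intro t p hp hat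
        exact absurd hat (hnot t p hp)
      · rw [hceq'] at hle
        exact absurd hle Sum.not_inl_le_inr
    · rw [hceq] at hle
      rcases hcode' (σ c) hlt with ⟨hnot', hceq'⟩ | ⟨t', p', hp', hat', hceq'⟩
      · rw [hceq'] at hle
        exact absurd hle Sum.not_inr_le_inl
      · rw [hceq'] at hle
        have hpp : p ≤ p' ∧ L.getD c 0 - p ≤ L'.getD (σ c) 0 - p' := by
          have := Sum.inr_le_inr_iff.1 hle
          exact Prod.mk_le_mk.1 this
        have hs : shift c = p' - p := by rw [hshift]; simp only; rw [hceq, hceq']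
        refine ⟨fun i hi => by omega, ?_⟩
        intro t'' p'' hp'' hat''
        have htt : t'' = t := Fin.ext (by have := t''.isLt; have := t.isLt; omega)
        rw [htt] at hat''
        have : p'' = p := (hinj c c p'' p hc hc hp'' hp (by rw [← hat'', ← hat])).2
        refine ⟨t', ?_⟩
        rw [hat']
        congr 1
        omega
  choose cf hcf pf hpf hgf using fun x => hsurj x
  have hσinj' : ∀ c c', c < L.length → c' < L.length → σ c = σ c' → c = c' :=
    fun c c' hc hc' => hσinj c c' (by omega) (by omega)
  refine ⟨fun x => g' (σ (cf x)) (pf x + shift (cf x)), ?_, ?_, ?_⟩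
  · intro x y hxy
    obtain ⟨hltx, hbx, -⟩ := key (cf x) (hcf x)
    obtain ⟨hlty, hby, -⟩ := key (cf y) (hcf y)
    obtain ⟨hc, hi⟩ := hinj' _ _ _ _ hltx hlty (hbx _ (hpf x)) (hby _ (hpf y)) hxy
    have hcc : cf x = cf y := hσinj' _ _ (hcf x) (hcf y) hc
    have : pf x = pf y := by rw [hcc] at hi; omega
    rw [← hgf x, ← hgf y, hcc, this]
  · intro x y
    obtain ⟨hltx, hbx, -⟩ := key (cf x) (hcf x)
    obtain ⟨hlty, hby, -⟩ := key (cf y) (hcf y)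
    dsimp only
    rw [hedge' _ _ _ _ hltx hlty (hbx _ (hpf x)) (hby _ (hpf y))]
    conv_lhs => rw [← hgf x, ← hgf y]
    rw [hedge _ _ _ _ (hcf x) (hcf y) (hpf x) (hpf y)]
    constructor
    · rintro ⟨hcc, hadj⟩
      rw [hcc]
      exact ⟨rfl, by omega⟩
    · rintro ⟨hcc, hadj⟩
      have hcc2 : cf x = cf y := hσinj' _ _ (hcf x) (hcf y) hcc
      rw [hcc2] at hadj ⊢
      exact ⟨rfl, by omega⟩
  · intro t
    dsimp only
    obtain ⟨-, -, hm⟩ := key (cf (a t)) (hcf (a t))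
    obtain ⟨t', ht'⟩ := hm t (pf (a t)) (hpf (a t)) (hgf (a t)).symm
    have htt : t' = t := Fin.ext (by have := t'.isLt; have := t.isLt; omega)
    rw [htt] at ht'
    exact ht'.symm

end Package

section Glue

/-- Substructure-of-substructure closure transfer. -/
lemma map_closure_union {M : Type} [Language.graph.Structure M]
    (N : Language.graph.Substructure M) (s : Set N) :
    (Substructure.closure Language.graph s).map N.subtype.toHom =
      Substructure.closure Language.graph ((↑) '' s : Set M) := by
  apply SetLike.ext
  intro x
  simp only [Substructure.mem_map, Substructure.mem_closure_iff_of_isRelational]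
  constructor
  · rintro ⟨y, hy, rfl⟩
    exact ⟨y, hy, rfl⟩
  · rintro ⟨y, hy, rfl⟩
    exact ⟨y, hy, rfl⟩

lemma dir_easy {B : ℕ} (hB : B ≤ 1) (φ : Language.graph.Sentence) (n : ℕ)
    (H : ∀ (M : Type) [Language.graph.Structure M] [Nonempty M], InUndirPaths M →
      (M ⊨ φ ↔ ∃ a : Fin B → M, ∀ b : Fin n → M,
        ↥(Substructure.closure Language.graph (Set.range a ∪ Set.range b)) ⊨ φ)) :
    ∀ (M : Type) [Language.graph.Structure M] [Nonempty M], InUndirPaths M → M ⊨ φ →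
      ∃ C : Finset M, C.card ≤ B ∧ IsCore φ M ↑C := by
  intro M _ _ hM hφ
  classical
  obtain ⟨a, ha⟩ := (H M hM).1 hφ
  refine ⟨Finset.image a Finset.univ, ?_, ?_⟩
  · calc (Finset.image a Finset.univ).card ≤ (Finset.univ : Finset (Fin B)).card :=
        Finset.card_image_le
    _ = B := by simp
  · intro N hsub hne
    have hMN : InUndirPaths N := hM.sub N
    have hra : Set.range a ⊆ (N : Set M) := by
      refine subset_trans ?_ hsub
      rw [Finset.coe_image, Finset.coe_univ, Set.image_univ]
    refine (H N hMN).2 ?_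
    refine ⟨fun t => ⟨a t, hra (Set.mem_range_self t)⟩, ?_⟩
    intro b'
    have hval := ha (fun j => (b' j : M))
    have himg : ((↑) '' (Set.range (fun t => (⟨a t, hra (Set.mem_range_self t)⟩ : N)) ∪
        Set.range b') : Set M) =
        Set.range a ∪ Set.range (fun j => (b' j : M)) := by
      rw [Set.image_union, ← Set.range_comp, ← Set.range_comp]
      rfl
    have hmapeq := map_closure_union N
      (Set.range (fun t => (⟨a t, hra (Set.mem_range_self t)⟩ : N)) ∪ Set.range b')
    rw [himg] at hmapeq
    rw [← hmapeq] at hval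
    exact (iso_realize (N.subtype.substructureEquivMap _) φ).2 hval

end Glue

section Hard

/-- Enumerate a finite nonempty set by a tuple of any sufficient length. -/
lemma exists_fin_cover {M : Type} {s : Set M} (hfin : s.Finite) (hne : s.Nonempty) {n : ℕ}
    (hcard : Nat.card s ≤ n) : ∃ b : Fin n → M, Set.range b = s := by
  have : Finite s := hfin
  obtain ⟨k, ⟨e⟩⟩ := Finite.exists_equiv_fin s
  have hk : Nat.card s = k := Nat.card_eq_of_equiv_fin e
  have hk1 : 1 ≤ k := by
    rcases hne with ⟨x, hx⟩
    have := (e ⟨x, hx⟩).isLt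
    omega
  refine ⟨fun j => ((e.symm ⟨min j.val (k - 1), by omega⟩ : s) : M), ?_⟩
  ext x
  constructor
  · rintro ⟨j, rfl⟩
    exact (e.symm _).2
  · intro hx
    have hjlt := (e ⟨x, hx⟩).isLt
    refine ⟨⟨(e ⟨x, hx⟩).val, by omega⟩, ?_⟩
    have hm : min ((e ⟨x, hx⟩) : ℕ) (k - 1) = (e ⟨x, hx⟩ : ℕ) := by omega
    simp only [hm]
    rw [show (⟨((e ⟨x, hx⟩) : ℕ), by omega⟩ : Fin k) = e ⟨x, hx⟩ from Fin.ext rfl]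
    rw [Equiv.symm_apply_apply]

/-- A graph-language embedding from an injective edge-preserving map. -/
def mkEmb {M N : Type} [Language.graph.Structure M] [Language.graph.Structure N]
    (F : M → N) (hFi : Function.Injective F) (hFe : ∀ x y, E M x y ↔ E N (F x) (F y)) :
    M ↪[Language.graph] N where
  toFun := F
  inj' := hFi
  map_fun' := fun {n} f _ => isEmptyElim f
  map_rel' := fun {n} r x => by
    cases r
    rw [relMap_iff, relMap_iff]
    exact (hFe (x 0) (x 1)).symm

lemma card_lt_of_ne_top {M : Type} [Language.graph.Structure M] [Finite M]
    {Q : Language.graph.Substructure M} (hQ : Q ≠ ⊤) :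
    Nat.card Q < Nat.card M := by
  have h1 : Nat.card Q = (Q : Set M).ncard := Nat.card_coe_set_eq _
  have h2 : (Q : Set M).ncard < (Set.univ : Set M).ncard := by
    apply Set.ncard_lt_ncard _ (Set.finite_univ)
    refine ⟨Set.subset_univ _, ?_⟩
    intro huniv
    apply hQ
    apply SetLike.ext
    intro x
    simp only [Substructure.mem_top, iff_true]
    exact huniv (Set.mem_univ x)
  rw [h1]
  calc (Q : Set M).ncard < (Set.univ : Set M).ncard := h2
  _ = Nat.card M := Set.ncard_univ M

lemma dir_hard {B : ℕ} (hB : B ≤ 1) (φ : Language.graph.Sentence)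
    (H : ∀ (M : Type) [Language.graph.Structure M] [Nonempty M], InUndirPaths M → M ⊨ φ →
      ∃ C : Finset M, C.card ≤ B ∧ IsCore φ M ↑C) :
    ∃ n : ℕ, ∀ (M : Type) [Language.graph.Structure M] [Nonempty M], InUndirPaths M →
      (M ⊨ φ ↔ ∃ a : Fin B → M, ∀ b : Fin n → M,
        ↥(Substructure.closure Language.graph (Set.range a ∪ Set.range b)) ⊨ φ) := by
  classical
  by_contra hno
  rw [not_exists] at hno
  have step : ∀ n : ℕ, ∃ (P : Type) (_ : Language.graph.Structure P) (_ : Nonempty P)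
      (a : Fin B → P), InUndirPaths P ∧ ¬ P ⊨ φ ∧ n + 1 < Nat.card P ∧
      ∀ Q : Language.graph.Substructure P, Q ≠ ⊤ → (∀ t, a t ∈ Q) → Nonempty Q → ↥Q ⊨ φ := by
    intro n
    by_contra hstep
    apply hno (n + 1)
    intro M sM neM hM
    have hfinM : Finite M := hM.1
    constructor
    · -- forward direction via cores
      intro hφ
      obtain ⟨C, hC, hcore⟩ := H M hM hφ
      obtain ⟨a, ha⟩ : ∃ a : Fin B → M, ↑C ⊆ Set.range a := by
        rcases C.eq_empty_or_nonempty with rfl | ⟨c, hc⟩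
        · exact ⟨fun _ => Classical.arbitrary M, by simp⟩
        · have hB1 : 1 ≤ B := le_trans (Finset.card_pos.2 ⟨c, hc⟩) hC
          have hcard1 : C.card = 1 := le_antisymm (le_trans hC hB)
            (Finset.card_pos.2 ⟨c, hc⟩)
          obtain ⟨x, hx⟩ := Finset.card_eq_one.1 hcard1
          refine ⟨fun _ => c, ?_⟩
          intro y hy
          rw [hx] at hy hc
          simp only [Finset.coe_singleton, Set.mem_singleton_iff] at hy
          rw [Finset.mem_singleton] at hc
          exact ⟨⟨0, by omega⟩, by rw [hy, hc]⟩
      refine ⟨a, fun b => ?_⟩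
      apply hcore
      · refine subset_trans ha (subset_trans Set.subset_union_left
          Substructure.subset_closure)
      · exact ⟨⟨b ⟨0, by omega⟩, Substructure.subset_closure
          (Set.mem_union_right _ (Set.mem_range_self _))⟩⟩
    · -- backward direction: if it failed we could build a minimal counterexample
      rintro ⟨a, ha⟩
      by_contra hnφ
      apply hstep
      set K : ℕ → Prop := fun k => ∃ N : Language.graph.Substructure M, Nonempty ↥N ∧
        (∀ t, a t ∈ N) ∧ ¬ ↥N ⊨ φ ∧ Nat.card ↥N = k with hK
      have hKex : ∃ k, K k := by
        refine ⟨_, ⊤, ⟨⟨Classical.arbitrary M, Substructure.mem_top _⟩⟩,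
          fun t => Substructure.mem_top _, ?_, rfl⟩
        intro htop
        exact hnφ ((top_realize φ).1 htop)
      obtain ⟨N, hNne, hNa, hNφ, hNcard⟩ := Nat.find_spec hKex
      have hNmin : ∀ k, k < Nat.find hKex → ¬ K k := fun k hk => Nat.find_min hKex hk
      have hNfin : Finite ↥N := Subtype.finite
      -- the minimal counterexample is large
      have hsize : n + 1 < Nat.card ↥N := by
        by_contra hsmall
        have hcard : Nat.card ↥N ≤ n + 1 := by omega
        have hne' : (N : Set M).Nonempty := by
          obtain ⟨⟨x, hx⟩⟩ := hNne
          exact ⟨x, hx⟩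
        obtain ⟨b, hb⟩ := exists_fin_cover (Set.toFinite _) hne' hcard
        have hceq : Substructure.closure Language.graph (Set.range a ∪ Set.range b) = N := by
          apply SetLike.ext
          intro x
          rw [Substructure.mem_closure_iff_of_isRelational]
          constructor
          · rintro (⟨t, rfl⟩ | hx)
            · exact hNa t
            · have hx' : x ∈ (N : Set M) := hb ▸ hx
              exact hx'
          · intro hx
            right
            have hx' : x ∈ (N : Set M) := hx
            rw [← hb] at hx'
            exact hx'
        have hval := ha b
        rw [hceq] at hval
        exact hNφ hval
      refine ⟨↥N, inferInstance, hNne, fun t => ⟨a t, hNa t⟩, hM.sub N, hNφ, hsize, ?_⟩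
      intro Q hQtop hQa hQne
      set Q' := Q.map N.subtype.toHom with hQ'
      have hiso := N.subtype.substructureEquivMap Q
      have hcards : Nat.card ↥Q = Nat.card ↥Q' := Nat.card_congr hiso.toEquiv
      have hlt : Nat.card ↥Q' < Nat.find hKex := by
        rw [← hcards, ← hNcard]
        exact card_lt_of_ne_top hQtop
      have hQ'φ : ↥Q' ⊨ φ := by
        by_contra hq
        refine hNmin _ hlt ⟨Q', ?_, ?_, hq, rfl⟩
        · obtain ⟨⟨x, hx⟩⟩ := hQne
          exact ⟨⟨(x : M), Substructure.mem_map.2 ⟨x, hx, rfl⟩⟩⟩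
        · intro t
          exact Substructure.mem_map.2 ⟨⟨a t, hNa t⟩, hQa t, rfl⟩
      exact (iso_realize hiso φ).2 hQ'φ
  -- extract the sequence and run the WQO argument
  choose P sP neP aseq hpath hnphi hsize hmin using step
  have hEcard : ∀ n : ℕ, n + 1 < @Nat.card (P n) := hsize
  set e : ℕ → ℕ := fun k => Nat.rec 0 (fun _ prev => @Nat.card (P prev)) k with he
  have he0 : e 0 = 0 := rfl
  have heS : ∀ k, e (k + 1) = @Nat.card (P (e k)) := fun k => rfl
  have hemono : ∀ k, e k < e (k + 1) := by
    intro k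
    rw [heS]
    have := hsize (e k)
    omega
  have hcardmono : ∀ k, @Nat.card (P (e k)) < @Nat.card (P (e (k + 1))) := by
    intro k
    rw [← heS]
    have := hsize (e (k + 1))
    omega
  -- packages
  choose Lc gc codec hclen hsurj hinj hedge hcode using
    fun k => @package (P (e k)) (sP (e k)) (hpath (e k)) (neP (e k)) B hB (aseq (e k))
  obtain ⟨k, k', hkk, hr⟩ := codes_wqo (fun k => codec k)
  obtain ⟨F, hFi, hFe, hFa⟩ := @build_embed (P (e k)) (P (e k')) (sP (e k)) (sP (e k')) B hB
    (aseq (e k)) (aseq (e k')) (Lc k) (gc k) (codec k) (Lc k') (gc k') (codec k')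
    (hclen k) (hclen k') (hsurj k) (hinj k) (hedge k) (hinj k') (hedge k') (hcode k)
    (hcode k') hr
  -- the image substructure
  letI := sP (e k)
  letI := sP (e k')
  haveI := neP (e k)
  haveI := neP (e k')
  haveI : Finite (P (e k')) := (hpath (e k')).1
  set emb := mkEmb F hFi hFe with hemb
  set S := emb.toHom.range with hS
  have hcards : ∀ j j', j < j' → @Nat.card (P (e j)) < @Nat.card (P (e j')) := by
    intro j j' hjj
    induction j' with
    | zero => omega
    | succ j'' ih =>
      rcases Nat.lt_succ_iff_lt_or_eq.1 hjj with hlt | heq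
      · exact lt_trans (ih hlt) (hcardmono j'')
      · rw [heq]; exact hcardmono j''
  have hcardlt : @Nat.card (P (e k)) < @Nat.card (P (e k')) := hcards k k' hkk
  have hiso : Nonempty ((P (e k)) ≃[Language.graph] ↥S) := ⟨emb.equivRange⟩
  have hStop : S ≠ ⊤ := by
    intro htop
    have h1 : Nat.card ↥S = @Nat.card (P (e k)) := (Nat.card_congr hiso.some.toEquiv).symm
    have h2 : Nat.card ↥S = @Nat.card (P (e k')) := by
      rw [htop]
      exact Nat.card_congr Substructure.topEquiv.toEquiv
    omega
  have hSa : ∀ t, aseq (e k') t ∈ S := by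
    intro t
    rw [← hFa t]
    exact emb.toHom.mem_range_self _
  have hSne : Nonempty ↥S :=
    ⟨⟨F (Classical.arbitrary _), emb.toHom.mem_range_self _⟩⟩
  have hSφ : ↥S ⊨ φ := hmin (e k') S hStop hSa hSne
  exact hnphi (e k) ((iso_realize hiso.some φ).2 hSφ)

end Hard


/-- Over the class 𝒞 of finite disjoint unions of finite undirected paths: for `B ∈ {0,1}`,
an FO sentence `φ` is in `PSC(B)` over 𝒞 iff there exists `n ∈ ℕ` such that `φ` is
equivalent over 𝒞 to the condition: there exist elements `a₁,…,a_B` such that for all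
elements `b₁,…,b_n`, the substructure induced on `{a₁,…,a_B,b₁,…,b_n}` satisfies `φ`. -/
theorem statement17 (B : ℕ) (hB : B ≤ 1) (φ : Language.graph.Sentence) :
    (∀ (M : Type) [Language.graph.Structure M] [Nonempty M], InUndirPaths M → M ⊨ φ →
        ∃ C : Finset M, C.card ≤ B ∧ IsCore φ M ↑C) ↔
      ∃ n : ℕ, ∀ (M : Type) [Language.graph.Structure M] [Nonempty M], InUndirPaths M →
        (M ⊨ φ ↔
          ∃ a : Fin B → M, ∀ b : Fin n → M,
            ↥(Substructure.closure Language.graph (Set.range a ∪ Set.range b)) ⊨ φ) := by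
  constructor
  · intro h
    exact dir_hard hB φ h
  · rintro ⟨n, hn⟩
    exact dir_easy hB φ n hn

end Stmt
end

section
/- Let τ be a purely relational vocabulary (predicate symbols only) and let φ = ∃x₁…∃x_k ∀y ψ(x₁,…,x_k,y) with ψ quantifier-free, where no existentially quantified variable x_i is compared with the universally quantified variable y using equality in ψ. If φ is preserved under substructures, then φ is logically equivalent to the condition that every substructure induced on at most n elements satisfies φ, where n = 2^{|τ|}. -/
open FirstOrder Language

universe u v

namespace Stmt

variable {L : FirstOrder.Language.{u, v}}

/-- The quantifier rank of a bounded formula: the maximum depth of nesting of quantifiers. -/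
def qr {α : Type*} : ∀ {n : ℕ}, L.BoundedFormula α n → ℕ
  | _, .falsum => 0
  | _, .equal _ _ => 0
  | _, .rel _ _ => 0
  | _, .imp f g => max (qr f) (qr g)
  | _, .all f => qr f + 1

/-- The vocabulary consisting of `k` unary predicate symbols (and nothing else). -/
def unaryLang (k : ℕ) : FirstOrder.Language :=
  ⟨fun _ => Empty, fun n => if n = 1 then Fin k else Empty⟩

/-- `φ` is preserved under substructures: every (nonempty) substructure of every model of `φ`
satisfies `φ`. -/
def PS (φ : L.Sentence) : Prop :=
  ∀ (M : Type max u v) [L.Structure M] [Nonempty M], M ⊨ φ →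
    ∀ N : L.Substructure M, (N : Set M).Nonempty → ↥N ⊨ φ

/-- The term `t` uses the variable `a`. -/
def UsesVar {γ : Type*} (a : γ) : L.Term γ → Prop
  | .var b => a = b
  | .func _ ts => ∃ i, UsesVar a (ts i)

/-- No equality atom of the formula compares the variable of index `k` (the universally
quantified variable) with a variable of index `< k` (an existentially quantified variable). -/
def NoEqAcross (k : ℕ) : ∀ {m : ℕ}, L.BoundedFormula Empty m → Prop
  | _, .falsum => True
  | m, .equal t₁ t₂ =>
      ∀ (h : k < m) (i : Fin m), (i : ℕ) < k →
        ¬ ((UsesVar (Sum.inr ⟨k, h⟩) t₁ ∧ UsesVar (Sum.inr i) t₂) ∨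
           (UsesVar (Sum.inr ⟨k, h⟩) t₂ ∧ UsesVar (Sum.inr i) t₁))
  | _, .rel _ _ => True
  | _, .imp f g => NoEqAcross k f ∧ NoEqAcross k g
  | _, .all f => NoEqAcross k f

section Aux

variable [L.IsRelational]

/-- In a relational language, every term over `Empty ⊕ Fin m` is a variable `Sum.inr p`. -/
def theVar {m : ℕ} : L.Term (Empty ⊕ Fin m) → Fin m
  | .var (Sum.inl e) => e.elim
  | .var (Sum.inr p) => p
  | .func f _ => isEmptyElim f

lemma theVar_spec {m : ℕ} (t : L.Term (Empty ⊕ Fin m)) :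
    t = FirstOrder.Language.Term.var (Sum.inr (theVar t)) := by
  match t with
  | .var (Sum.inl e) => exact e.elim
  | .var (Sum.inr p) => rfl
  | .func f _ => exact isEmptyElim f

lemma qf_transfer {M₁ : Type*} {M₂ : Type*} [L.Structure M₁] [L.Structure M₂] {k : ℕ}
    {φ : L.BoundedFormula Empty (k + 1)} (hqf : φ.IsQF) (hne : NoEqAcross k φ)
    (v₁ : Empty → M₁) (v₂ : Empty → M₂)
    (xs₁ : Fin (k + 1) → M₁) (xs₂ : Fin (k + 1) → M₂)
    (h1 : ∀ i j : Fin (k + 1), ((i : ℕ) = k ↔ (j : ℕ) = k) → (xs₁ i = xs₁ j ↔ xs₂ i = xs₂ j))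
    (h2 : ∀ (l : ℕ) (R : L.Relations l) (t : Fin l → Fin (k + 1)),
      Structure.RelMap R (xs₁ ∘ t) ↔ Structure.RelMap R (xs₂ ∘ t)) :
    φ.Realize v₁ xs₁ ↔ φ.Realize v₂ xs₂ := by
  revert hne
  induction hqf with
  | falsum => intro _; exact Iff.rfl
  | of_isAtomic h =>
    cases h with
    | equal t₁ t₂ =>
      intro hne
      rw [theVar_spec t₁, theVar_spec t₂] at hne ⊢
      show Term.realize _ _ = Term.realize _ _ ↔ Term.realize _ _ = Term.realize _ _
      simp only [Term.realize_var, Sum.elim_inr]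
      apply h1
      constructor
      · intro hp
        by_contra hq
        have hqlt : (theVar t₂ : ℕ) < k :=
          lt_of_le_of_ne (Nat.lt_succ_iff.mp (theVar t₂).isLt) hq
        exact hne (Nat.lt_succ_self k) (theVar t₂) hqlt
          (Or.inl ⟨congrArg Sum.inr (Fin.ext hp.symm), rfl⟩)
      · intro hq
        by_contra hp
        have hplt : (theVar t₁ : ℕ) < k :=
          lt_of_le_of_ne (Nat.lt_succ_iff.mp (theVar t₁).isLt) hp
        exact hne (Nat.lt_succ_self k) (theVar t₁) hplt
          (Or.inr ⟨congrArg Sum.inr (Fin.ext hq.symm), rfl⟩)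
    | rel R ts =>
      intro _
      show Structure.RelMap R _ ↔ Structure.RelMap R _
      have e1 : (fun i => Term.realize (Sum.elim v₁ xs₁) (ts i)) =
          xs₁ ∘ (fun i => theVar (ts i)) := by
        funext i; rw [theVar_spec (ts i)]; simp
      have e2 : (fun i => Term.realize (Sum.elim v₂ xs₂) (ts i)) =
          xs₂ ∘ (fun i => theVar (ts i)) := by
        funext i; rw [theVar_spec (ts i)]; simp
      rw [e1, e2]
      exact h2 _ R _
  | imp hf hg ihf ihg =>
    intro hne
    show (_ → _) ↔ (_ → _)
    rw [ihf hne.1, ihg hne.2]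

variable {M : Type*} [L.Structure M]

/-- Auxiliary structure on `M ⊕ ↥W`. -/
def starStructure (r : M → M) (W : Set M) : L.Structure (M ⊕ ↥W) where
  funMap := fun f _ => isEmptyElim f
  RelMap := fun {l} R v =>
    ((∀ i, (v i).isLeft) ∧ Structure.RelMap R (Sum.elim id Subtype.val ∘ v)) ∨
    ((¬ ∀ i, (v i).isLeft) ∧ (∀ i j : Fin l, (v i).isLeft → (v j).isLeft → v i = v j) ∧
      Structure.RelMap R (Sum.elim r Subtype.val ∘ v))

lemma star_relMap (r : M → M) (W : Set M) {l : ℕ} (R : L.Relations l) (v : Fin l → M ⊕ ↥W) :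
    (starStructure (L := L) r W).RelMap R v ↔
    ((∀ i, (v i).isLeft) ∧ Structure.RelMap R (Sum.elim id Subtype.val ∘ v)) ∨
    ((¬ ∀ i, (v i).isLeft) ∧ (∀ i j : Fin l, (v i).isLeft → (v j).isLeft → v i = v j) ∧
      Structure.RelMap R (Sum.elim r Subtype.val ∘ v)) := Iff.rfl

lemma star_relMap_inl (r : M → M) (W : Set M) {l : ℕ} (R : L.Relations l) (w : Fin l → M) :
    (starStructure (L := L) r W).RelMap R (Sum.inl ∘ w) ↔ Structure.RelMap R w := by
  rw [star_relMap]
  constructor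
  · rintro (⟨-, h⟩ | ⟨h, -⟩)
    · exact h
    · exact absurd (fun i => rfl) h
  · intro h
    exact Or.inl ⟨fun i => rfl, h⟩

end Aux

/-- Let `τ` be a purely relational vocabulary and `φ = ∃x₁…x_k ∀y ψ(x₁,…,x_k,y)` with `ψ`
quantifier-free, where no existentially quantified variable is compared with the universally
quantified variable using equality in `ψ`. If `φ` is preserved under substructures, then `φ`
is logically equivalent to the condition that every substructure induced on at most `n`
elements satisfies `φ`, where `n = 2^{|τ|}`. -/
theorem statement19 (L : FirstOrder.Language.{u, v}) [L.IsRelational] [Finite L.Symbols]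
    (k : ℕ) (ψ : L.BoundedFormula Empty (k + 1)) (hqf : ψ.IsQF)
    (hne : NoEqAcross k ψ) (hps : PS ψ.all.exs) :
    ∀ (M : Type max u v) [L.Structure M] [Nonempty M],
      M ⊨ ψ.all.exs ↔
        ∀ b : Fin (2 ^ Nat.card L.Symbols) → M,
          ↥(Substructure.closure L (Set.range b)) ⊨ ψ.all.exs := by
  intro M _ _
  constructor
  · -- easy direction: preservation
    intro hφ b
    exact hps M hφ (Substructure.closure L (Set.range b))
      ⟨b ⟨0, Nat.two_pow_pos _⟩, Substructure.subset_closure (Set.mem_range_self _)⟩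
  · intro H
    classical
    -- the diagonal 1-type of an element
    let tp : M → (L.Symbols → Prop) := fun a s =>
      match s with
      | Sum.inl f => isEmptyElim f.2
      | Sum.inr r => Structure.RelMap r.2 (fun _ => a)
    have tp_rel : ∀ a a' : M, tp a = tp a' → ∀ {l : ℕ} (R : L.Relations l),
        Structure.RelMap R (fun _ : Fin l => a) ↔ Structure.RelMap R (fun _ : Fin l => a') := by
      intro a a' h l R
      exact iff_of_eq (congrFun h (Sum.inr ⟨l, R⟩))
    have hcard : Nat.card (L.Symbols → Prop) = 2 ^ Nat.card L.Symbols := by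
      rw [Nat.card_fun, Nat.card_congr Equiv.propEquivBool, Nat.card_eq_fintype_card,
        Fintype.card_bool]
    let e : (L.Symbols → Prop) ≃ Fin (2 ^ Nat.card L.Symbols) := Finite.equivFinOfCardEq hcard
    let rep : (L.Symbols → Prop) → M := fun t => Classical.epsilon (fun a => tp a = t)
    have hrep : ∀ a : M, tp (rep (tp a)) = tp a := fun a =>
      Classical.epsilon_spec (⟨a, rfl⟩ : ∃ x, tp x = tp a)
    let b : Fin (2 ^ Nat.card L.Symbols) → M := fun i => rep (e.symm i)
    set N := Substructure.closure L (Set.range b) with hNdef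
    have hb : ∀ a : M, rep (tp a) ∈ N := by
      intro a
      apply Substructure.subset_closure
      exact ⟨e (tp a), by simp [b]⟩
    obtain ⟨xs, hxs⟩ := BoundedFormula.realize_exs.mp (H b)
    have hxs2 : ∀ y : ↥N, ψ.Realize (default : Empty → ↥N) (Fin.snoc xs y) :=
      BoundedFormula.realize_all.mp hxs
    set xbar : Fin k → M := Subtype.val ∘ xs with hxbar
    have fact1 : ∀ a : M, a ∈ N → ψ.Realize (default : Empty → M) (Fin.snoc xbar a) := by
      intro a ha
      have key : (Fin.snoc xbar a : Fin (k+1) → M) =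
          Subtype.val ∘ (Fin.snoc xs ⟨a, ha⟩ : Fin (k+1) → ↥N) := by
        rw [Fin.comp_snoc]
      refine (qf_transfer hqf hne default default (Fin.snoc xs ⟨a, ha⟩) (Fin.snoc xbar a)
        ?_ ?_).mp (hxs2 ⟨a, ha⟩)
      · intro i j _
        rw [key]
        exact ⟨fun h => congrArg Subtype.val h, fun h => Subtype.ext h⟩
      · intro l R t
        rw [key]
        exact Iff.rfl
    have hxbarN : ∀ i, xbar i ∈ N := fun i => (xs i).2
    -- the star structure
    set r : M → M := fun a => rep (tp a) with hr
    set W : Set M := Set.range xbar with hW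
    letI SS : L.Structure (M ⊕ ↥W) := starStructure r W
    set xstar : Fin k → M ⊕ ↥W := fun i => Sum.inr ⟨xbar i, Set.mem_range_self i⟩ with hxstar
    have hstar : ∀ y : M ⊕ ↥W, ψ.Realize (default : Empty → (M ⊕ ↥W)) (Fin.snoc xstar y) := by
      intro y
      cases y with
      | inl a =>
        refine (qf_transfer hqf hne default default (Fin.snoc xbar (rep (tp a)))
          (Fin.snoc xstar (Sum.inl a)) ?_ ?_).mp (fact1 _ (hb a))
        · -- h1
          intro i j hij
          by_cases hi : i = Fin.last k
          · have hj : j = Fin.last k := by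
              apply Fin.ext
              exact hij.mp (by rw [hi]; rfl)
            rw [hi, hj]
            simp
          · have hj : j ≠ Fin.last k := by
              intro hj
              exact hi (Fin.ext (hij.mpr (by rw [hj]; rfl)))
            obtain ⟨i', rfl⟩ := Fin.exists_castSucc_eq.mpr hi
            obtain ⟨j', rfl⟩ := Fin.exists_castSucc_eq.mpr hj
            simp only [Fin.snoc_castSucc, hxstar]
            constructor
            · intro h
              have hst : (⟨xbar i', Set.mem_range_self i'⟩ : ↥W) =
                  ⟨xbar j', Set.mem_range_self j'⟩ := Subtype.ext h
              rw [hst]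
            · intro h
              have hst := Sum.inr_injective h
              have hst2 := Subtype.ext_iff.mp hst
              exact hst2
        · -- h2
          intro l R t
          rw [star_relMap]
          by_cases hall : ∀ i : Fin l, ((Fin.snoc xstar (Sum.inl a) ∘ t) i).isLeft
          · have ht : ∀ i, t i = Fin.last k := by
              intro i
              by_contra hti
              obtain ⟨i', hi'⟩ := Fin.exists_castSucc_eq.mpr hti
              have := hall i
              rw [Function.comp_apply, ← hi', Fin.snoc_castSucc] at this
              simp [hxstar] at this
            have hv : (Fin.snoc xstar (Sum.inl a) ∘ t) = fun _ => Sum.inl a := by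
              funext i; rw [Function.comp_apply, ht i, Fin.snoc_last]
            have hx : (Fin.snoc xbar (rep (tp a)) ∘ t) = fun _ => rep (tp a) := by
              funext i; rw [Function.comp_apply, ht i, Fin.snoc_last]
            rw [hv, hx]
            constructor
            · intro h
              refine Or.inl ⟨fun _ => rfl, ?_⟩
              show Structure.RelMap R (fun _ : Fin l => a)
              exact (tp_rel _ _ (hrep a) R).mp h
            · rintro (⟨-, h⟩ | ⟨hno, -⟩)
              · exact (tp_rel _ _ (hrep a) R).mpr h
              · exact absurd (fun _ => rfl) hno
          · have hvx : Sum.elim r Subtype.val ∘ (Fin.snoc xstar (Sum.inl a) ∘ t) =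
                Fin.snoc xbar (rep (tp a)) ∘ t := by
              funext i
              by_cases hti : t i = Fin.last k
              · simp only [Function.comp_apply, hti, Fin.snoc_last]; rfl
              · obtain ⟨i', hi'⟩ := Fin.exists_castSucc_eq.mpr hti
                simp only [Function.comp_apply, ← hi', Fin.snoc_castSucc]; rfl
            have honeleft : ∀ i0, ((Fin.snoc xstar (Sum.inl a) ∘ t) i0).isLeft →
                (Fin.snoc xstar (Sum.inl a) ∘ t) i0 = Sum.inl a := by
              intro i0 h0
              by_cases ht0 : t i0 = Fin.last k
              · rw [Function.comp_apply, ht0, Fin.snoc_last]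
              · obtain ⟨i', hi'⟩ := Fin.exists_castSucc_eq.mpr ht0
                rw [Function.comp_apply, ← hi', Fin.snoc_castSucc] at h0
                simp [hxstar] at h0
            constructor
            · intro h
              refine Or.inr ⟨hall, ?_, by rw [hvx]; exact h⟩
              intro i j hi hj
              rw [honeleft i hi, honeleft j hj]
            · rintro (⟨ha', -⟩ | ⟨-, -, h⟩)
              · exact absurd ha' hall
              · rw [hvx] at h; exact h
      | inr w =>
        obtain ⟨w, hw⟩ := w
        obtain ⟨i0, hi0⟩ := hw
        have hwN : w ∈ N := hi0 ▸ hxbarN i0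
        set u : Fin (k+1) → ↥W :=
          Fin.snoc (fun i => ⟨xbar i, Set.mem_range_self i⟩) ⟨w, ⟨i0, hi0⟩⟩ with hu
        have hu1 : (Fin.snoc xstar (Sum.inr ⟨w, ⟨i0, hi0⟩⟩) : Fin (k+1) → M ⊕ ↥W) =
            Sum.inr ∘ u := by
          rw [hu, Fin.comp_snoc]; rfl
        have hu2 : (Fin.snoc xbar w : Fin (k+1) → M) = Subtype.val ∘ u := by
          rw [hu, Fin.comp_snoc]; rfl
        refine (qf_transfer hqf hne default default (Fin.snoc xbar w)
          (Fin.snoc xstar (Sum.inr ⟨w, ⟨i0, hi0⟩⟩)) ?_ ?_).mp (fact1 _ hwN)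
        · intro i j _
          rw [hu1, hu2]
          exact ⟨fun h => congrArg Sum.inr (Subtype.ext h), fun h => congrArg Subtype.val
            (Sum.inr_injective h)⟩
        · intro l R t
          rw [hu1, hu2, star_relMap]
          constructor
          · intro h
            by_cases hall : ∀ i : Fin l, (((Sum.inr ∘ u) ∘ t : Fin l → M ⊕ ↥W) i).isLeft
            · exact Or.inl ⟨hall, h⟩
            · refine Or.inr ⟨hall, ?_, h⟩
              intro i j hi
              simp at hi
          · rintro (⟨-, h⟩ | ⟨-, -, h⟩) <;> exact h
    -- the star structure models φ
    haveI : Nonempty (M ⊕ ↥W) := ⟨Sum.inl (Classical.arbitrary M)⟩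
    have hMs : (M ⊕ ↥W) ⊨ ψ.all.exs :=
      BoundedFormula.realize_exs.mpr ⟨xstar, BoundedFormula.realize_all.mpr hstar⟩
    -- come back down to M using preservation
    let N₂ : L.Substructure (M ⊕ ↥W) :=
      ⟨Set.range Sum.inl, fun {l} f => isEmptyElim f⟩
    have hN₂ : ↥N₂ ⊨ ψ.all.exs :=
      hps (M ⊕ ↥W) hMs N₂ ⟨Sum.inl (Classical.arbitrary M), Set.mem_range_self _⟩
    obtain ⟨ys, hys⟩ := BoundedFormula.realize_exs.mp hN₂
    have hys2 : ∀ y : ↥N₂, ψ.Realize (default : Empty → ↥N₂) (Fin.snoc ys y) :=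
      BoundedFormula.realize_all.mp hys
    let p : ↥N₂ → M := fun z => Sum.elim id Subtype.val (z : M ⊕ ↥W)
    have hz : ∀ z : ↥N₂, (z : M ⊕ ↥W) = Sum.inl (p z) := by
      rintro ⟨-, a, rfl⟩; rfl
    refine BoundedFormula.realize_exs.mpr ⟨p ∘ ys, BoundedFormula.realize_all.mpr fun a => ?_⟩
    have hmem : (Sum.inl a : M ⊕ ↥W) ∈ N₂ := Set.mem_range_self _
    have hcomp : (Fin.snoc (p ∘ ys) a : Fin (k+1) → M) =
        p ∘ (Fin.snoc ys ⟨Sum.inl a, hmem⟩ : Fin (k+1) → ↥N₂) := by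
      rw [Fin.comp_snoc]
      rfl
    refine (qf_transfer hqf hne default default (Fin.snoc ys ⟨Sum.inl a, hmem⟩)
      (Fin.snoc (p ∘ ys) a) ?_ ?_).mp (hys2 ⟨Sum.inl a, hmem⟩)
    · intro i j _
      rw [hcomp]
      refine ⟨fun h => congrArg p h, fun h => ?_⟩
      apply Subtype.ext
      have e1 := hz ((Fin.snoc ys ⟨Sum.inl a, hmem⟩ : Fin (k+1) → ↥N₂) i)
      have e2 := hz ((Fin.snoc ys ⟨Sum.inl a, hmem⟩ : Fin (k+1) → ↥N₂) j)
      exact e1.trans ((congrArg Sum.inl h).trans e2.symm)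
    · intro l R t
      show Structure.RelMap R (fun i => ((Fin.snoc ys ⟨Sum.inl a, hmem⟩ ∘ t) i : M ⊕ ↥W)) ↔ _
      rw [show (fun i => ((Fin.snoc ys ⟨Sum.inl a, hmem⟩ ∘ t) i : M ⊕ ↥W)) =
        Sum.inl ∘ (p ∘ (Fin.snoc ys ⟨Sum.inl a, hmem⟩ ∘ t)) from funext fun i => hz _]
      rw [star_relMap_inl]
      rw [hcomp]
      exact Iff.rfl


end Stmt
end
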